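/- Assume that for every (x*,y*,α) ∈ W one has (f+δ_B)^c(x*,y*,α) = min_{λ∈ℝ^{(T)}_+} min_{(u*,v*,γ)∈W} { f^c(u*,v*,γ) + (λh)^c(x*−u*, y*−v*, α−γ) } with both minima attained. Then for all x̄ ∈ B ∩ dom f and all ε ≥ 0, ∂_{c,ε}(f+δ_B)(x̄) = ∪_{λ∈ℝ^{(T)}_+} ∪_{ε₁,ε₂ ≥ 0, ε₁+ε₂ = ε + (eco λh)(x̄)} { ∂_{c,ε₁} f(x̄) + ∂_{c,ε₂}(eco λh)(x̄) }. -/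

import Mathlib

open scoped Pointwise

noncomputable section

variable {X : Type*} [AddCommGroup X] [Module ℝ X] [TopologicalSpace X]

/-- `Wsp X` is the parameter space `X* × X* × ℝ` used in the `c`-conjugation scheme. -/
abbrev Wsp (X : Type*) [AddCommGroup X] [Module ℝ X] [TopologicalSpace X] :=
  (X →L[ℝ] ℝ) × (X →L[ℝ] ℝ) × ℝ

/-- The coupling function `c(x,(x*,y*,α)) = ⟨x,x*⟩` if `⟨x,y*⟩ < α`, `+∞` otherwise. -/
def coupling (x : X) (w : Wsp X) : EReal :=
  if w.2.1 x < w.2.2 then ((w.1 x : ℝ) : EReal) else ⊤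

/-- The `c`-conjugate of `f : X → ℝ∪{±∞}`.  (EReal subtraction gives priority to `-∞`.) -/
def cConj (f : X → EReal) : Wsp X → EReal :=
  fun w => ⨆ x : X, coupling x w - f x

/-- The `c'`-conjugate of `k : W → ℝ∪{±∞}`. -/
def cConj' (k : Wsp X → EReal) : X → EReal :=
  fun x => ⨆ w : Wsp X, coupling x w - k w

/-- Epigraph of an extended-real-valued function, as a subset of `Y × ℝ`. -/
def epiE {Y : Type*} (f : Y → EReal) : Set (Y × ℝ) :=
  {p | f p.1 ≤ (p.2 : EReal)}

/-- A set `C` is evenly convex (e-convex) if every point outside `C` can be strictly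
separated from `C` by a continuous linear functional. -/
def EConvexSet {Y : Type*} [AddCommGroup Y] [Module ℝ Y] [TopologicalSpace Y]
    (C : Set Y) : Prop :=
  ∀ x₀ ∉ C, ∃ φ : Y →L[ℝ] ℝ, ∀ x ∈ C, φ x < φ x₀

/-- A function is e-convex if its epigraph is an e-convex subset of `X × ℝ`. -/
def EConvexFn (f : X → EReal) : Prop := EConvexSet (epiE f)

/-- The e-convex hull of a function: its largest e-convex minorant. -/
def eco (f : X → EReal) : X → EReal :=
  fun x => ⨆ g : {g : X → EReal // EConvexFn g ∧ g ≤ f}, g.1 x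

/-- A function `k : W → ℝ∪{±∞}` is e'-convex if it is the pointwise supremum of a family
of functions of the form `w ↦ c(x,w) - β` with `x ∈ X`, `β ∈ ℝ`. -/
def E'ConvexFn (k : Wsp X → EReal) : Prop :=
  ∃ S : Set (X × ℝ), k = fun w => ⨆ p ∈ S, (coupling p.1 w - ((p.2 : ℝ) : EReal))

/-- The e'-convex hull of a function: its largest e'-convex minorant. -/
def e'co (k : Wsp X → EReal) : Wsp X → EReal :=
  fun w => ⨆ g : {g : Wsp X → EReal // E'ConvexFn g ∧ g ≤ k}, g.1 w

/-- A subset of `W × ℝ` is e'-convex if it is the epigraph of an e'-convex function. -/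
def E'ConvexSet (D : Set (Wsp X × ℝ)) : Prop :=
  ∃ k : Wsp X → EReal, E'ConvexFn k ∧ D = epiE k

/-- The e'-convex hull of a set: the smallest e'-convex set containing it. -/
def e'coSet (D : Set (Wsp X × ℝ)) : Set (Wsp X × ℝ) :=
  ⋂₀ {E : Set (Wsp X × ℝ) | E'ConvexSet E ∧ D ⊆ E}

/-- A function is proper if it never takes the value `-∞` and is not identically `+∞`. -/
def ProperFn {Y : Type*} (f : Y → EReal) : Prop :=
  (∀ x, f x ≠ ⊥) ∧ ∃ x, f x ≠ ⊤

/-- Convexity of an extended-real-valued function, via convexity of its epigraph. -/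
def ConvexFn (f : X → EReal) : Prop := Convex ℝ (epiE f)

open Classical in
/-- Indicator function: `0` on `D`, `+∞` elsewhere. -/
def indicatorE {Y : Type*} (D : Set Y) : Y → EReal :=
  fun x => if x ∈ D then 0 else ⊤

/-- The `ε`-`c`-subdifferential of `f` at `xb`; empty if `f xb ∉ ℝ`. -/
def cSubdiff (f : X → EReal) (ε : ℝ) (xb : X) : Set (Wsp X) :=
  {w | (∃ r : ℝ, f xb = (r : EReal)) ∧ w.2.1 xb < w.2.2 ∧
    ∀ x : X, coupling x w - coupling xb w - (ε : EReal) ≤ f x - f xb}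

/-- The e-affine function with parameters `(x', y', α, β)`. -/
def eAffine (x' y' : X →L[ℝ] ℝ) (α β : ℝ) : X → EReal :=
  fun x => if y' x < α then ((x' x - β : ℝ) : EReal) else ⊤

/-- A function is e-affine if it equals `eAffine x' y' α β` for some parameters. -/
def IsEAffine (a : X → EReal) : Prop :=
  ∃ x' y' α β, a = eAffine x' y' α β

/-- The set `Ẽ_{f₁,f₂}` of e-affine functions obtained by adding the parameters of an
e-affine minorant of `f₁` and one of `f₂`. -/
def ETilde (f₁ f₂ : X → EReal) : Set (X → EReal) :=
  {a | ∃ x₁ y₁ : X →L[ℝ] ℝ, ∃ α₁ β₁ : ℝ, ∃ x₂ y₂ : X →L[ℝ] ℝ, ∃ α₂ β₂ : ℝ,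
    eAffine x₁ y₁ α₁ β₁ ≤ f₁ ∧ eAffine x₂ y₂ α₂ β₂ ≤ f₂ ∧
    a = eAffine (x₁ + x₂) (y₁ + y₂) (α₁ + α₂) (β₁ + β₂)}

/-- The additivity condition (AC): `eco (f₁ + f₂) = sup {a : a ∈ Ẽ_{f₁,f₂}}`. -/
def ACcond (f₁ f₂ : X → EReal) : Prop :=
  eco (fun x => f₁ x + f₂ x) = fun x => ⨆ a ∈ ETilde f₁ f₂, a x

/-- Infimal convolution of two functions on `W`. -/
def infConv (k₁ k₂ : Wsp X → EReal) : Wsp X → EReal :=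
  fun w => ⨅ w' : Wsp X, k₁ w' + k₂ (w - w')

/-- The DC objective `f - g`, defined to be `+∞` outside `dom f`. -/
def dcDiff (f g : X → EReal) : X → EReal :=
  fun x => if f x = ⊤ then ⊤ else f x - g x

/-- `λh := Σ_{t∈T} λ_t h_t` for a nonnegative generalized finite sequence `λ`. -/
def lamh {T : Type*} (lam : T →₀ ℝ) (h : T → X → EReal) : X → EReal :=
  fun x => ∑ t ∈ lam.support, ((lam t : ℝ) : EReal) * h t x

/-- The set `B := ∩_{λ∈ℝ^{(T)}_+} {x : (eco λh)(x) ≤ 0}`. -/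
def Bset {T : Type*} (h : T → X → EReal) : Set X :=
  {x | ∀ lam : T →₀ ℝ, (∀ t, 0 ≤ lam t) → eco (lamh lam h) x ≤ 0}

/-- The set `K := ∪_{λ∈ℝ^{(T)}_+} epi (λh)^c`. -/
def Kset {T : Type*} (h : T → X → EReal) : Set (Wsp X × ℝ) :=
  ⋃ lam ∈ {l : T →₀ ℝ | ∀ t, 0 ≤ l t}, epiE (cConj (lamh lam h))



section AuxHelpers

variable {X : Type*} [AddCommGroup X] [Module ℝ X] [TopologicalSpace X]

private lemma ereal_trichot (x : EReal) : x = ⊥ ∨ (∃ r : ℝ, x = (r : EReal)) ∨ x = ⊤ := by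
  induction x using EReal.rec
  · exact Or.inl rfl
  · exact Or.inr (Or.inl ⟨_, rfl⟩)
  · exact Or.inr (Or.inr rfl)

private lemma coupling_cases (x : X) (w : Wsp X) :
    (w.2.1 x < w.2.2 ∧ coupling x w = ((w.1 x : ℝ) : EReal)) ∨
      (¬ w.2.1 x < w.2.2 ∧ coupling x w = ⊤) := by
  unfold coupling; split_ifs with hc
  · exact Or.inl ⟨hc, rfl⟩
  · exact Or.inr ⟨hc, rfl⟩

private lemma coupling_pos (x : X) (w : Wsp X) (hc : w.2.1 x < w.2.2) :
    coupling x w = ((w.1 x : ℝ) : EReal) := by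
  unfold coupling; rw [if_pos hc]

private lemma indicatorE_ne_bot {D : Set X} (x : X) : indicatorE D x ≠ ⊥ := by
  unfold indicatorE; split_ifs <;> simp

private lemma eAffine_econvex (x' y' : X →L[ℝ] ℝ) (α β : ℝ) :
    EConvexFn (eAffine x' y' α β) := by
  intro p₀ hp₀
  have hepi : ∀ p : X × ℝ, p ∈ epiE (eAffine x' y' α β) ↔ (y' p.1 < α ∧ x' p.1 - β ≤ p.2) := by
    intro p
    simp only [epiE, eAffine, Set.mem_setOf_eq]
    split_ifs with hc
    · rw [EReal.coe_le_coe_iff]; exact ⟨fun h => ⟨hc, h⟩, fun h => h.2⟩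
    · simp [hc]
  by_cases hy : y' p₀.1 < α
  · have hx : p₀.2 < x' p₀.1 - β := by
      by_contra hcon; push_neg at hcon
      exact hp₀ ((hepi p₀).2 ⟨hy, hcon⟩)
    refine ⟨x'.comp (ContinuousLinearMap.fst ℝ X ℝ) - ContinuousLinearMap.snd ℝ X ℝ, ?_⟩
    intro p hp
    have h2 := ((hepi p).1 hp).2
    simp only [ContinuousLinearMap.sub_apply, ContinuousLinearMap.coe_comp',
      Function.comp_apply, ContinuousLinearMap.coe_fst', ContinuousLinearMap.coe_snd']
    linarith
  · refine ⟨y'.comp (ContinuousLinearMap.fst ℝ X ℝ), ?_⟩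
    intro p hp
    have h1 := ((hepi p).1 hp).1
    push_neg at hy
    simp only [ContinuousLinearMap.coe_comp', Function.comp_apply,
      ContinuousLinearMap.coe_fst']
    linarith

private lemma le_eco {g a : X → EReal} (ha : EConvexFn a) (hle : a ≤ g) : a ≤ eco g := by
  intro x
  exact le_iSup (fun (g' : {g' : X → EReal // EConvexFn g' ∧ g' ≤ g}) => g'.1 x)
    (⟨a, ha, hle⟩ : {g' : X → EReal // EConvexFn g' ∧ g' ≤ g})

private lemma eAffine_eq_coupling (w : Wsp X) (β : ℝ) (x : X) :
    eAffine w.1 w.2.1 w.2.2 β x = coupling x w - (β : EReal) := by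
  unfold eAffine coupling
  split_ifs
  · rw [← EReal.coe_sub]
  · rw [EReal.top_sub_coe]

end AuxHelpers

/-- the min formula (ii) implies the subdifferential formula (iii). -/
theorem stmt12 [IsTopologicalAddGroup X] [ContinuousSMul ℝ X] [LocallyConvexSpace ℝ X] [T2Space X] {T : Type*}
    (f : X → EReal) (h : T → X → EReal)
    (hfp : ProperFn f) (hfc : ConvexFn f)
    (hhp : ∀ t, ProperFn (h t)) (hhc : ∀ t, ConvexFn (h t))
    (hII : (∀ w : Wsp X,
      (∃ lam : T →₀ ℝ, (∀ t, 0 ≤ lam t) ∧ ∃ w' : Wsp X,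
        cConj (fun x => f x + indicatorE (Bset h) x) w
          = cConj f w' + cConj (lamh lam h) (w - w')) ∧
      (∀ lam : T →₀ ℝ, (∀ t, 0 ≤ lam t) → ∀ w' : Wsp X,
        cConj (fun x => f x + indicatorE (Bset h) x) w
          ≤ cConj f w' + cConj (lamh lam h) (w - w')))) :
    (∀ xb : X, xb ∈ Bset h → f xb ≠ ⊤ → ∀ ε : ℝ, 0 ≤ ε →
      cSubdiff (fun x => f x + indicatorE (Bset h) x) ε xb =
        ⋃ lam ∈ {l : T →₀ ℝ | ∀ t, 0 ≤ l t},
          ⋃ ε₁ ∈ {e : ℝ | 0 ≤ e}, ⋃ ε₂ ∈ {e : ℝ | 0 ≤ e},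
            ⋃ (_ : (ε₁ : EReal) + (ε₂ : EReal) = (ε : EReal) + eco (lamh lam h) xb),
              (cSubdiff f ε₁ xb + cSubdiff (eco (lamh lam h)) ε₂ xb)) := by
  intro xb hxb hfxb ε hε
  have hfbot := hfp.1 xb
  obtain ⟨r, hfr⟩ : ∃ r : ℝ, f xb = (r : EReal) := by
    rcases ereal_trichot (f xb) with hb | hr | ht
    · exact absurd hb hfbot
    · exact hr
    · exact absurd ht hfxb
  have hind : indicatorE (Bset h) xb = 0 := by unfold indicatorE; rw [if_pos hxb]
  have hFxb : f xb + indicatorE (Bset h) xb = (r : EReal) := by rw [hind, add_zero, hfr]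
  apply Set.Subset.antisymm
  · -- ⊆ : uses hII
    intro w hw
    simp only [cSubdiff, Set.mem_setOf_eq] at hw
    obtain ⟨⟨r', hr'⟩, hlt, hin⟩ := hw
    obtain ⟨⟨lam, hlam, w', heq⟩, -⟩ := hII w
    have hecoB : eco (lamh lam h) xb ≤ 0 := hxb lam hlam
    -- lower bound on the split conjugate
    have hge : ((w.1 xb - r : ℝ) : EReal) ≤ cConj f w' + cConj (lamh lam h) (w - w') := by
      rw [← heq]
      have h1 : coupling xb w - (f xb + indicatorE (Bset h) xb)
          ≤ cConj (fun x => f x + indicatorE (Bset h) x) w :=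
        le_iSup (fun x => coupling x w - (f x + indicatorE (Bset h) x)) xb
      rwa [coupling_pos xb w hlt, hFxb, ← EReal.coe_sub] at h1
    -- upper bound on the split conjugate
    have hub : cConj f w' + cConj (lamh lam h) (w - w') ≤ ((w.1 xb + ε - r : ℝ) : EReal) := by
      rw [← heq]
      refine iSup_le fun x => ?_
      show coupling x w - (f x + indicatorE (Bset h) x) ≤ ((w.1 xb + ε - r : ℝ) : EReal)
      have hx := hin x
      have hx : _ := hx
      rw [coupling_pos xb w hlt, hFxb] at hx
      have hFx : f x + indicatorE (Bset h) x ≠ ⊥ := by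
        unfold indicatorE; split_ifs
        · rw [add_zero]; exact hfp.1 x
        · rw [EReal.add_top_of_ne_bot (hfp.1 x)]; simp
      rcases ereal_trichot (f x + indicatorE (Bset h) x) with hb | ⟨s, hs⟩ | ht
      · exact absurd hb hFx
      · rw [hs] at hx ⊢
        rcases coupling_cases x w with ⟨hc, hcv⟩ | ⟨hc, hcv⟩
        · rw [hcv] at hx ⊢
          rw [← EReal.coe_sub, ← EReal.coe_sub, ← EReal.coe_sub] at hx
          rw [← EReal.coe_sub, EReal.coe_le_coe_iff]
          have hx' : w.1 x - w.1 xb - ε ≤ s - r := by exact_mod_cast hx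
          linarith
        · exfalso
          rw [hcv, EReal.top_sub_coe, EReal.top_sub_coe, ← EReal.coe_sub] at hx
          exact (EReal.coe_lt_top _).not_ge hx
      · rw [ht, EReal.sub_top]; exact bot_le
    have hAbot : cConj f w' ≠ ⊥ := by
      intro hAb; rw [hAb, EReal.bot_add] at hge
      exact (EReal.coe_ne_bot _) (le_bot_iff.mp hge)
    have hBbot : cConj (lamh lam h) (w - w') ≠ ⊥ := by
      intro hBb; rw [hBb, EReal.add_bot] at hge
      exact (EReal.coe_ne_bot _) (le_bot_iff.mp hge)
    have hAtop : cConj f w' ≠ ⊤ := by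
      intro hAt; rw [hAt, EReal.top_add_of_ne_bot hBbot] at hub
      exact (EReal.coe_lt_top _).not_ge hub
    have hBtop : cConj (lamh lam h) (w - w') ≠ ⊤ := by
      intro hBt; rw [hBt, EReal.add_top_of_ne_bot hAbot] at hub
      exact (EReal.coe_lt_top _).not_ge hub
    obtain ⟨a, ha⟩ : ∃ a : ℝ, cConj f w' = (a : EReal) := by
      rcases ereal_trichot (cConj f w') with h' | h' | h'
      · exact absurd h' hAbot
      · exact h'
      · exact absurd h' hAtop
    obtain ⟨b, hb⟩ : ∃ b : ℝ, cConj (lamh lam h) (w - w') = (b : EReal) := by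
      rcases ereal_trichot (cConj (lamh lam h) (w - w')) with h' | h' | h'
      · exact absurd h' hBbot
      · exact h'
      · exact absurd h' hBtop
    -- the e-affine minorant of lamh, hence of eco lamh
    have hmin : ∀ x, coupling x (w - w') - (b : EReal) ≤ lamh lam h x := by
      intro x
      have hx : coupling x (w - w') - lamh lam h x ≤ (b : EReal) := by
        rw [← hb]
        exact le_iSup (fun x => coupling x (w - w') - lamh lam h x) x
      rcases ereal_trichot (lamh lam h x) with hb' | ⟨s, hs⟩ | ht'
      · exfalso
        rw [hb'] at hx
        rcases coupling_cases x (w - w') with ⟨_, hcv⟩ | ⟨_, hcv⟩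
        · rw [hcv] at hx
          have : ((w - w').1 x : EReal) - ⊥ = ⊤ := by
            rw [sub_eq_add_neg, EReal.neg_bot]
            exact EReal.add_top_of_ne_bot (EReal.coe_ne_bot _)
          rw [this] at hx
          exact (EReal.coe_lt_top b).not_ge hx
        · rw [hcv] at hx
          have : (⊤ : EReal) - ⊥ = ⊤ := by
            rw [sub_eq_add_neg, EReal.neg_bot]
            exact EReal.add_top_of_ne_bot (by simp)
          rw [this] at hx
          exact (EReal.coe_lt_top b).not_ge hx
      · rw [hs] at hx ⊢
        rcases coupling_cases x (w - w') with ⟨_, hcv⟩ | ⟨_, hcv⟩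
        · rw [hcv] at hx ⊢
          rw [← EReal.coe_sub] at hx
          have hx' : (w - w').1 x - s ≤ b := by exact_mod_cast hx
          rw [← EReal.coe_sub, EReal.coe_le_coe_iff]
          linarith
        · exfalso
          rw [hcv, EReal.top_sub_coe] at hx
          exact (EReal.coe_lt_top b).not_ge hx
      · rw [ht']; exact le_top
    have haff_le : eAffine (w - w').1 (w - w').2.1 (w - w').2.2 b ≤ lamh lam h := by
      intro x
      rw [eAffine_eq_coupling]
      exact hmin x
    have hecomin : ∀ x, coupling x (w - w') - (b : EReal) ≤ eco (lamh lam h) x := by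
      intro x
      have h2 := le_eco (eAffine_econvex (w - w').1 (w - w').2.1 (w - w').2.2 b) haff_le x
      rwa [eAffine_eq_coupling] at h2
    -- coupling xb (w - w') is finite
    obtain ⟨hlt2, hc2v⟩ : (w - w').2.1 xb < (w - w').2.2 ∧
        coupling xb (w - w') = (((w - w').1 xb : ℝ) : EReal) := by
      rcases coupling_cases xb (w - w') with hgood | ⟨_, hcv⟩
      · exact hgood
      · exfalso
        have h1 := hecomin xb
        rw [hcv, EReal.top_sub_coe] at h1
        have h2 := le_trans h1 hecoB
        simp at h2
    -- eco (lamh) xb is finite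
    obtain ⟨m, hm⟩ : ∃ m : ℝ, eco (lamh lam h) xb = (m : EReal) := by
      rcases ereal_trichot (eco (lamh lam h) xb) with hb' | hr' | ht'
      · exfalso
        have h1 := hecomin xb
        rw [hc2v, hb', ← EReal.coe_sub] at h1
        exact (EReal.coe_ne_bot _) (le_bot_iff.mp h1)
      · exact hr'
      · exfalso; rw [ht'] at hecoB; simp at hecoB
    have hm0 : m ≤ 0 := by
      rw [hm] at hecoB; exact_mod_cast hecoB
    have hu2m : (w - w').1 xb - b ≤ m := by
      have h1 := hecomin xb
      rw [hc2v, hm, ← EReal.coe_sub] at h1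
      exact_mod_cast h1
    -- coupling xb w' is finite
    have hAxb : coupling xb w' - (r : EReal) ≤ (a : EReal) := by
      rw [← hfr, ← ha]
      exact le_iSup (fun x => coupling x w' - f x) xb
    obtain ⟨hlt1, hc1v⟩ : w'.2.1 xb < w'.2.2 ∧ coupling xb w' = ((w'.1 xb : ℝ) : EReal) := by
      rcases coupling_cases xb w' with hgood | ⟨_, hcv⟩
      · exact hgood
      · exfalso
        rw [hcv, EReal.top_sub_coe] at hAxb
        exact (EReal.coe_lt_top a).not_ge hAxb
    have hu1r : w'.1 xb - r ≤ a := by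
      rw [hc1v, ← EReal.coe_sub] at hAxb
      exact_mod_cast hAxb
    have hkey : a + b ≤ w.1 xb + ε - r := by
      rw [ha, hb, ← EReal.coe_add] at hub
      exact_mod_cast hub
    have hu12 : w'.1 xb + (w - w').1 xb = w.1 xb := by
      have h2 : (w - w').1 = w.1 - w'.1 := rfl
      rw [h2, ContinuousLinearMap.sub_apply]; ring
    set ε₂ : ℝ := b + m - (w - w').1 xb with hε₂def
    set ε₁ : ℝ := ε + m - ε₂ with hε₁def
    have hε₂0 : 0 ≤ ε₂ := by rw [hε₂def]; linarith
    have hε₁0 : 0 ≤ ε₁ := by rw [hε₁def, hε₂def]; linarith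
    have hsum : (ε₁ : EReal) + (ε₂ : EReal) = (ε : EReal) + eco (lamh lam h) xb := by
      rw [hm, ← EReal.coe_add, ← EReal.coe_add, EReal.coe_eq_coe_iff, hε₁def]
      ring
    have hmem1 : w' ∈ cSubdiff f ε₁ xb := by
      refine ⟨⟨r, hfr⟩, hlt1, fun x => ?_⟩
      rw [hc1v, hfr]
      have hAx : coupling x w' - f x ≤ (a : EReal) := by
        rw [← ha]; exact le_iSup (fun x => coupling x w' - f x) x
      rcases ereal_trichot (f x) with hb' | ⟨s, hs⟩ | ht'
      · exact absurd hb' (hfp.1 x)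
      · rw [hs] at hAx ⊢
        rcases coupling_cases x w' with ⟨_, hcv⟩ | ⟨_, hcv⟩
        · rw [hcv] at hAx ⊢
          rw [← EReal.coe_sub] at hAx
          have h1 : w'.1 x - s ≤ a := by exact_mod_cast hAx
          rw [← EReal.coe_sub, ← EReal.coe_sub, ← EReal.coe_sub, EReal.coe_le_coe_iff,
            hε₁def, hε₂def]
          linarith
        · exfalso
          rw [hcv, EReal.top_sub_coe] at hAx
          exact (EReal.coe_lt_top a).not_ge hAx
      · rw [ht', EReal.top_sub_coe]; exact le_top
    have hmem2 : w - w' ∈ cSubdiff (eco (lamh lam h)) ε₂ xb := by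
      refine ⟨⟨m, hm⟩, hlt2, fun x => ?_⟩
      rw [hc2v, hm]
      have hx := hecomin x
      rcases ereal_trichot (eco (lamh lam h) x) with hb' | ⟨e, he⟩ | ht'
      · exfalso
        rw [hb'] at hx
        rcases coupling_cases x (w - w') with ⟨_, hcv⟩ | ⟨_, hcv⟩
        · rw [hcv, ← EReal.coe_sub] at hx
          exact (EReal.coe_ne_bot _) (le_bot_iff.mp hx)
        · rw [hcv, EReal.top_sub_coe] at hx
          exact (by simp : ¬((⊤ : EReal) ≤ ⊥)) hx
      · rw [he] at hx ⊢
        rcases coupling_cases x (w - w') with ⟨_, hcv⟩ | ⟨_, hcv⟩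
        · rw [hcv, ← EReal.coe_sub] at hx
          have h1 : (w - w').1 x - b ≤ e := by exact_mod_cast hx
          rw [hcv, ← EReal.coe_sub, ← EReal.coe_sub, ← EReal.coe_sub, EReal.coe_le_coe_iff,
            hε₂def]
          linarith
        · exfalso
          rw [hcv, EReal.top_sub_coe] at hx
          exact (EReal.coe_lt_top e).not_ge hx
      · rw [ht', EReal.top_sub_coe]; exact le_top
    simp only [Set.mem_iUnion, Set.mem_setOf_eq]
    refine ⟨lam, hlam, ε₁, hε₁0, ε₂, hε₂0, hsum, ?_⟩
    have hw'' : w' + (w - w') = w := by abel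
    rw [← hw'']
    exact Set.add_mem_add hmem1 hmem2
  · -- ⊇
    intro w hw
    simp only [Set.mem_iUnion, Set.mem_setOf_eq] at hw
    obtain ⟨lam, hlam, ε₁, hε₁0, ε₂, hε₂0, hsum, hmem⟩ := hw
    rw [Set.mem_add] at hmem
    obtain ⟨w1, hw1, w2, hw2, hw12⟩ := hmem
    obtain ⟨⟨r1, hr1⟩, hlt1, hin1⟩ := hw1
    obtain ⟨⟨m, hm⟩, hlt2, hin2⟩ := hw2
    have hεm : ε₁ + ε₂ = ε + m := by
      rw [hm] at hsum; exact_mod_cast hsum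
    have hw2eq : w.2.1 = w1.2.1 + w2.2.1 := by rw [← hw12]; rfl
    have hw2eq2 : w.2.2 = w1.2.2 + w2.2.2 := by rw [← hw12]; rfl
    have hw1eq : w.1 = w1.1 + w2.1 := by rw [← hw12]; rfl
    have hltw : w.2.1 xb < w.2.2 := by
      rw [hw2eq, hw2eq2, ContinuousLinearMap.add_apply]
      exact add_lt_add hlt1 hlt2
    refine ⟨⟨r, ?_⟩, hltw, fun x => ?_⟩
    · exact hFxb
    · have hc1 : coupling xb w1 = ((w1.1 xb : ℝ) : EReal) := coupling_pos xb w1 hlt1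
      have hc2 : coupling xb w2 = ((w2.1 xb : ℝ) : EReal) := coupling_pos xb w2 hlt2
      show coupling x w - coupling xb w - (ε : EReal)
        ≤ (f x + indicatorE (Bset h) x) - (f xb + indicatorE (Bset h) xb)
      rw [coupling_pos xb w hltw, hFxb]
      by_cases hxB : x ∈ Bset h
      · have hindx : indicatorE (Bset h) x = 0 := by unfold indicatorE; rw [if_pos hxB]
        rw [hindx, add_zero]
        have hecx : eco (lamh lam h) x ≤ 0 := hxB lam hlam
        have hx2 := hin2 x
        rw [hc2, hm] at hx2
        obtain ⟨e, he⟩ : ∃ e : ℝ, eco (lamh lam h) x = (e : EReal) := by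
          rcases ereal_trichot (eco (lamh lam h) x) with hb' | hr' | ht'
          · exfalso
            rw [hb'] at hx2
            have hbm : (⊥ : EReal) - (m : EReal) = ⊥ := by
              rw [sub_eq_add_neg, EReal.bot_add]
            rw [hbm] at hx2
            rcases coupling_cases x w2 with ⟨_, hcv⟩ | ⟨_, hcv⟩
            · rw [hcv, ← EReal.coe_sub, ← EReal.coe_sub] at hx2
              exact (EReal.coe_ne_bot _) (le_bot_iff.mp hx2)
            · rw [hcv, EReal.top_sub_coe, EReal.top_sub_coe] at hx2
              exact (by simp : ¬((⊤ : EReal) ≤ ⊥)) hx2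
          · exact hr'
          · exfalso; rw [ht'] at hecx; simp at hecx
        have he0 : e ≤ 0 := by rw [he] at hecx; exact_mod_cast hecx
        rw [he] at hx2
        have hx1 := hin1 x
        rw [hc1, hfr] at hx1
        rcases ereal_trichot (f x) with hb' | ⟨s, hs⟩ | ht'
        · exact absurd hb' (hfp.1 x)
        · rw [hs] at hx1 ⊢
          rcases coupling_cases x w1 with ⟨hcnd1, hcv1⟩ | ⟨_, hcv1⟩
          swap
          · exfalso
            rw [hcv1, EReal.top_sub_coe, EReal.top_sub_coe, ← EReal.coe_sub] at hx1
            exact (EReal.coe_lt_top _).not_ge hx1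
          rcases coupling_cases x w2 with ⟨hcnd2, hcv2⟩ | ⟨_, hcv2⟩
          swap
          · exfalso
            rw [hcv2, EReal.top_sub_coe, EReal.top_sub_coe, ← EReal.coe_sub] at hx2
            exact (EReal.coe_lt_top _).not_ge hx2
          have hv1 : w1.1 x - w1.1 xb - ε₁ ≤ s - r := by
            rw [hcv1, ← EReal.coe_sub, ← EReal.coe_sub, ← EReal.coe_sub] at hx1
            exact_mod_cast hx1
          have hv2 : w2.1 x - w2.1 xb - ε₂ ≤ e - m := by
            rw [hcv2, ← EReal.coe_sub, ← EReal.coe_sub, ← EReal.coe_sub] at hx2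
            exact_mod_cast hx2
          have hcndw : w.2.1 x < w.2.2 := by
            rw [hw2eq, hw2eq2, ContinuousLinearMap.add_apply]
            exact add_lt_add hcnd1 hcnd2
          rw [coupling_pos x w hcndw, ← EReal.coe_sub, ← EReal.coe_sub, ← EReal.coe_sub,
            EReal.coe_le_coe_iff]
          have hwx : w.1 x = w1.1 x + w2.1 x := by
            rw [hw1eq, ContinuousLinearMap.add_apply]
          have hwxb : w.1 xb = w1.1 xb + w2.1 xb := by
            rw [hw1eq, ContinuousLinearMap.add_apply]
          linarith
        · rw [ht', EReal.top_sub_coe]; exact le_top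
      · have hindx : indicatorE (Bset h) x = ⊤ := by unfold indicatorE; rw [if_neg hxB]
        rw [hindx, EReal.add_top_of_ne_bot (hfp.1 x), EReal.top_sub_coe]
        exact le_top


end
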